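/- For every natural number n, the cylindrical board (4+2n)′×3 does not admit a fault-free domino tiling. -/
import Mathlib


/-- Adjacency on the cylindrical board `a′ × b` (height `a`, circumference `b`):
cells `(i,j)` and `(i+1,j)` (vertical neighbors) or `(i,j)` and `(i,j+1)` with
addition in `ZMod b` (horizontal neighbors, wrapping around). -/
def cylAdj (a b : ℕ) (c d : Fin a × ZMod b) : Prop :=
  (c.2 = d.2 ∧ ((c.1 : ℕ) + 1 = (d.1 : ℕ) ∨ (d.1 : ℕ) + 1 = (c.1 : ℕ))) ∨
  (c.1 = d.1 ∧ (d.2 = c.2 + 1 ∨ c.2 = d.2 + 1))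

section Aux
open Finset
variable {a : ℕ} (f : Fin a × ZMod 3 → Fin a × ZMod 3)

def UpP (x : Fin a × ZMod 3) : Prop := (f x).2 = x.2 ∧ (x.1 : ℕ) + 1 = ((f x).1 : ℕ)
def DnP (x : Fin a × ZMod 3) : Prop := (f x).2 = x.2 ∧ ((f x).1 : ℕ) + 1 = (x.1 : ℕ)
def HzP (x : Fin a × ZMod 3) : Prop := (f x).1 = x.1

open Classical in
noncomputable def nvN (i : ℕ) : ℕ :=
  if h : i < a then (Finset.univ.filter (fun j : ZMod 3 => UpP f (⟨i, h⟩, j))).card else 0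

open Classical in
noncomputable def nhN (i : ℕ) : ℕ :=
  if h : i < a then (Finset.univ.filter (fun j : ZMod 3 => HzP f (⟨i, h⟩, j))).card else 0

open Classical in
noncomputable def ndN (i : ℕ) : ℕ :=
  if h : i < a then (Finset.univ.filter (fun j : ZMod 3 => DnP f (⟨i, h⟩, j))).card else 0

lemma trichP (hadj : ∀ x, cylAdj a 3 x (f x)) (x : Fin a × ZMod 3) : UpP f x ∨ DnP f x ∨ HzP f x := by
  rcases hadj x with ⟨h1, h2⟩ | ⟨h1, _⟩
  · rcases h2 with h2 | h2
    · exact Or.inl ⟨h1.symm, h2⟩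
    · exact Or.inr (Or.inl ⟨h1.symm, h2⟩)
  · exact Or.inr (Or.inr h1.symm)

lemma hz_ne (hadj : ∀ x, cylAdj a 3 x (f x)) (x : Fin a × ZMod 3) (h : HzP f x) : (f x).2 ≠ x.2 := by
  rcases hadj x with ⟨_, h2⟩ | ⟨_, h2⟩
  · unfold HzP at h; omega
  · rcases h2 with h2 | h2 <;> intro he
    · rw [he] at h2; exact one_ne_zero (left_eq_add.mp h2)
    · rw [he] at h2; exact one_ne_zero (left_eq_add.mp h2)

end Aux

section More
open Finset Classical
variable {a : ℕ} (f : Fin a × ZMod 3 → Fin a × ZMod 3)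

lemma up_not_dn {x} (h : UpP f x) : ¬ DnP f x := by unfold UpP DnP at *; omega
lemma up_not_hz {x} (h : UpP f x) : ¬ HzP f x := by
  unfold UpP HzP at *; intro he; rw [he] at h; omega
lemma dn_not_hz {x} (h : DnP f x) : ¬ HzP f x := by
  unfold DnP HzP at *; intro he; rw [he] at h; omega

lemma rowSum (hadj : ∀ x, cylAdj a 3 x (f x)) (r : ℕ) (hr : r < a) :
    ndN f r + nvN f r + nhN f r = 3 := by
  classical
  unfold ndN nvN nhN
  rw [dif_pos hr, dif_pos hr, dif_pos hr]
  have hU : ((univ.filter (fun j : ZMod 3 => DnP f (⟨r, hr⟩, j))) ∪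
      (univ.filter (fun j : ZMod 3 => UpP f (⟨r, hr⟩, j))) ∪
      (univ.filter (fun j : ZMod 3 => HzP f (⟨r, hr⟩, j)))) = univ := by
    ext j
    simp only [mem_union, mem_filter, mem_univ, true_and, iff_true]
    rcases trichP f hadj (⟨r, hr⟩, j) with h | h | h
    · exact Or.inl (Or.inr h)
    · exact Or.inl (Or.inl h)
    · exact Or.inr h
  have hc : (univ : Finset (ZMod 3)).card = 3 := by simp
  conv_rhs => rw [← hc, ← hU]
  rw [card_union_of_disjoint, card_union_of_disjoint]
  · rw [disjoint_left]; intro j hj1 hj2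
    simp only [mem_filter, mem_univ, true_and] at hj1 hj2
    exact up_not_dn f hj2 hj1
  · rw [disjoint_left]; intro j hj1 hj2
    simp only [mem_union, mem_filter, mem_univ, true_and] at hj1 hj2
    rcases hj1 with h | h
    · exact dn_not_hz f h hj2
    · exact up_not_hz f h hj2

end More

section More2
open Finset Classical
variable {a : ℕ} (f : Fin a × ZMod 3 → Fin a × ZMod 3)

lemma nd_zero : ndN f 0 = 0 := by
  classical
  unfold ndN
  split
  · rw [Finset.card_eq_zero, Finset.filter_eq_empty_iff]
    intro j _
    unfold DnP
    simp only [not_and]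
    intro _
    omega
  · rfl

lemma nv_top (h : 0 < a) : nvN f (a - 1) = 0 := by
  classical
  unfold nvN
  rw [dif_pos (by omega : a - 1 < a)]
  rw [Finset.card_eq_zero, Finset.filter_eq_empty_iff]
  intro j _
  unfold UpP
  simp only [not_and]
  intro _
  have := ((f (⟨a - 1, by omega⟩, j)).1).isLt
  omega

lemma nd_succ (hinv : ∀ x, f (f x) = x) (r : ℕ) (hr : r + 1 < a) :
    ndN f (r + 1) = nvN f r := by
  classical
  unfold ndN nvN
  rw [dif_pos hr, dif_pos (by omega : r < a)]
  congr 1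
  ext j
  simp only [mem_filter, mem_univ, true_and]
  constructor
  · rintro ⟨h1, h2⟩
    have hfx : f (⟨r + 1, hr⟩, j) = ((f (⟨r + 1, hr⟩, j)).1, j) :=
      Prod.ext_iff.mpr ⟨rfl, h1⟩
    have hval : ((f (⟨r + 1, hr⟩, j)).1 : ℕ) = r := by simp at h2; omega
    have hfin : (f (⟨r + 1, hr⟩, j)).1 = ⟨r, by omega⟩ := Fin.ext hval
    rw [hfin] at hfx
    have : f (⟨r, by omega⟩, j) = (⟨r + 1, hr⟩, j) := by
      rw [← hfx, hinv]
    constructor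
    · rw [this]
    · rw [this]
  · rintro ⟨h1, h2⟩
    have hfx : f (⟨r, by omega⟩, j) = ((f (⟨r, by omega⟩, j)).1, j) :=
      Prod.ext_iff.mpr ⟨rfl, h1⟩
    have hval : ((f (⟨r, by omega⟩, j)).1 : ℕ) = r + 1 := by simp at h2; omega
    have hfin : (f (⟨r, by omega⟩, j)).1 = ⟨r + 1, hr⟩ := Fin.ext hval
    rw [hfin] at hfx
    have : f (⟨r + 1, hr⟩, j) = (⟨r, by omega⟩, j) := by
      rw [← hfx, hinv]
    constructor
    · rw [this]
    · rw [this]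

lemma hz_pair (hadj : ∀ x, cylAdj a 3 x (f x)) (hinv : ∀ x, f (f x) = x)
    (r : Fin a) (j : ZMod 3) (h : HzP f (r, j)) :
    (f (r, j)).2 ≠ j ∧ HzP f (r, (f (r, j)).2) ∧ f (r, (f (r, j)).2) = (r, j) := by
  have hfx : f (r, j) = (r, (f (r, j)).2) := by
    have h' : (f (r, j)).1 = r := h
    exact Prod.ext_iff.mpr ⟨h', rfl⟩
  refine ⟨hz_ne f hadj _ h, ?_, ?_⟩
  · unfold HzP
    rw [← hfx, hinv]
    exact h.symm
  · rw [← hfx, hinv]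

lemma nh_even (hadj : ∀ x, cylAdj a 3 x (f x)) (hinv : ∀ x, f (f x) = x)
    (r : ℕ) (hr : r < a) : nhN f r = 0 ∨ nhN f r = 2 := by
  classical
  unfold nhN
  rw [dif_pos hr]
  set s := univ.filter (fun j : ZMod 3 => HzP f (⟨r, hr⟩, j)) with hs
  have hcard : s.card ≤ 3 := by
    calc s.card ≤ (univ : Finset (ZMod 3)).card := card_filter_le _ _
    _ = 3 := by simp
  have hmem : ∀ j, j ∈ s ↔ HzP f (⟨r, hr⟩, j) := by
    intro j; rw [hs, mem_filter]; simp
  -- not 1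
  have h1 : s.card ≠ 1 := by
    intro h1
    obtain ⟨j, hj⟩ := Finset.card_eq_one.mp h1
    have hjm : j ∈ s := by rw [hj]; exact mem_singleton_self j
    obtain ⟨hne, hhz, _⟩ := hz_pair f hadj hinv ⟨r, hr⟩ j ((hmem j).mp hjm)
    have : (f (⟨r, hr⟩, j)).2 ∈ s := (hmem _).mpr hhz
    rw [hj, mem_singleton] at this
    exact hne this
  -- not 3
  have h3 : s.card ≠ 3 := by
    intro h3
    have huniv : s = univ := by
      apply Finset.eq_univ_of_card
      rw [h3]; simp
    have hall : ∀ j : ZMod 3, HzP f (⟨r, hr⟩, j) := by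
      intro j; exact (hmem j).mp (huniv ▸ mem_univ j)
    set σ : ZMod 3 → ZMod 3 := fun j => (f (⟨r, hr⟩, j)).2 with hσ
    have hne : ∀ j, σ j ≠ j := fun j => (hz_pair f hadj hinv _ j (hall j)).1
    have hσσ : ∀ j, σ (σ j) = j := by
      intro j
      obtain ⟨_, _, h⟩ := hz_pair f hadj hinv ⟨r, hr⟩ j (hall j)
      show (f (⟨r, hr⟩, σ j)).2 = j
      rw [hσ]
      simp only []
      rw [h]
    have key : ∀ z : ZMod 3, z = 0 ∨ z = 1 ∨ z = 2 := by decide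
    rcases key (σ 0) with h0 | h0 | h0
    · exact hne 0 h0
    · have h10 : σ 1 = 0 := by rw [← h0, hσσ]
      rcases key (σ 2) with h2 | h2 | h2
      · have := hσσ 2; rw [h2, h0] at this; exact (by decide : (1 : ZMod 3) ≠ 2) this
      · have := hσσ 2; rw [h2, h10] at this; exact (by decide : (0 : ZMod 3) ≠ 2) this
      · exact hne 2 h2
    · have h20 : σ 2 = 0 := by rw [← h0, hσσ]
      rcases key (σ 1) with h2 | h2 | h2
      · have := hσσ 1; rw [h2, h0] at this; exact (by decide : (2 : ZMod 3) ≠ 1) this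
      · exact hne 1 h2
      · have := hσσ 1; rw [h2, h20] at this; exact (by decide : (0 : ZMod 3) ≠ 1) this
  omega

end More2

section Main
open Finset Classical
variable {a : ℕ} (f : Fin a × ZMod 3 → Fin a × ZMod 3)

lemma nv_le (i : ℕ) : nvN f i ≤ 3 := by
  classical
  unfold nvN
  split
  · calc _ ≤ (univ : Finset (ZMod 3)).card := card_filter_le _ _
      _ = 3 := by simp
  · omega

lemma nv_pos
    (hH : ∀ i : ℕ, i + 1 < a → ∃ c : Fin a × ZMod 3,
      (c.1 : ℕ) = i ∧ (f c).2 = c.2 ∧ ((f c).1 : ℕ) = i + 1)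
    (i : ℕ) (hi : i + 1 < a) : 1 ≤ nvN f i := by
  classical
  obtain ⟨c, hc1, hc2, hc3⟩ := hH i hi
  unfold nvN
  rw [dif_pos (by omega : i < a)]
  refine Finset.card_pos.mpr ⟨c.2, ?_⟩
  rw [mem_filter]
  refine ⟨mem_univ _, ?_⟩
  have hc : c = (⟨i, by omega⟩, c.2) := by
    refine Prod.ext_iff.mpr ⟨Fin.ext ?_, rfl⟩
    exact hc1
  rw [← hc]
  exact ⟨hc2, by omega⟩

lemma hz_boundary (n : ℕ) (ha : a = 4 + 2 * n)
    (hadj : ∀ x, cylAdj a 3 x (f x)) (hinv : ∀ x, f (f x) = x)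
    (hH : ∀ i : ℕ, i + 1 < a → ∃ c : Fin a × ZMod 3,
      (c.1 : ℕ) = i ∧ (f c).2 = c.2 ∧ ((f c).1 : ℕ) = i + 1) :
    ∀ x : Fin a × ZMod 3, HzP f x → (x.1 : ℕ) = 0 ∨ (x.1 : ℕ) = a - 1 := by
  classical
  -- rowEq' : for r+1 < a, nvN r + nvN (r+1) + nhN (r+1) = 3
  have rowEq' : ∀ r : ℕ, r + 1 < a → nvN f r + nvN f (r + 1) + nhN f (r + 1) = 3 := by
    intro r hr
    have := rowSum f hadj (r + 1) hr
    rw [nd_succ f hinv r hr] at this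
    omega
  have rowEq0 : nvN f 0 + nhN f 0 = 3 := by
    have := rowSum f hadj 0 (by omega)
    rw [nd_zero f] at this
    omega
  have hnv0 : nvN f 0 = 1 := by
    rcases nh_even f hadj hinv 0 (by omega) with h | h
    · exfalso
      have h30 : nvN f 0 = 3 := by omega
      have e := rowEq' 0 (by omega)
      rw [show (0:ℕ) + 1 = 1 from rfl] at e
      have := nv_pos f hH 1 (by omega)
      have := nh_even f hadj hinv 1 (by omega)
      omega
    · omega
  have step : ∀ k, 2 * k + 2 < a → nvN f (2 * k) = 1 →
      nvN f (2 * k + 2) = 1 ∧ nhN f (2 * k + 1) = 0 ∧ nhN f (2 * k + 2) = 0 := by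
    intro k hk hnv
    have e1 := rowEq' (2 * k) (by omega)
    have p1 := nv_pos f hH (2 * k + 1) (by omega)
    have q1 := nh_even f hadj hinv (2 * k + 1) (by omega)
    have hnh1 : nhN f (2 * k + 1) = 0 := by omega
    have hnv1 : nvN f (2 * k + 1) = 2 := by omega
    have e2 := rowEq' (2 * k + 1) (by omega)
    rw [show 2 * k + 1 + 1 = 2 * k + 2 from by omega] at e2
    have q2 := nh_even f hadj hinv (2 * k + 2) (by omega)
    refine ⟨by omega, hnh1, by omega⟩
  have main : ∀ k, 2 * k + 2 < a → nvN f (2 * k) = 1 := by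
    intro k
    induction k with
    | zero => intro _; exact hnv0
    | succ m ih =>
      intro hm
      have h1 : 2 * m + 2 < a := by omega
      have := step m h1 (ih h1)
      have h3 : nvN f (2 * m + 2) = 1 := this.1
      rw [show 2 * (m + 1) = 2 * m + 2 from by omega]
      exact h3
  have noMid : ∀ r : ℕ, 1 ≤ r → r + 1 < a → nhN f r = 0 := by
    intro r h1 h2
    rcases Nat.even_or_odd r with ⟨k, hk⟩ | ⟨k, hk⟩
    · -- r = 2k = 2(k-1)+2
      have hk1 : r = 2 * (k - 1) + 2 := by omega
      have := step (k - 1) (by omega) (main (k - 1) (by omega))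
      rw [hk1]
      exact this.2.2
    · have hk1 : r = 2 * k + 1 := by omega
      have := step k (by omega) (main k (by omega))
      rw [hk1]
      exact this.2.1
  intro x hx
  by_contra hcon
  push_neg at hcon
  have hr := x.1.isLt
  have h0 := noMid (x.1 : ℕ) (by omega) (by omega)
  unfold nhN at h0
  rw [dif_pos hr] at h0
  rw [Finset.card_eq_zero, Finset.filter_eq_empty_iff] at h0
  refine h0 (Finset.mem_univ x.2) ?_
  have : (⟨(x.1 : ℕ), hr⟩ : Fin a) = x.1 := Fin.ext rfl
  rw [this]
  exact hx

end Main

theorem auxFalse (n : ℕ) (f : Fin (4 + 2 * n) × ZMod 3 → Fin (4 + 2 * n) × ZMod 3)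
    (hadj : ∀ x, cylAdj (4 + 2 * n) 3 x (f x)) (hinv : ∀ x, f (f x) = x)
    (hH : ∀ i : ℕ, i + 1 < 4 + 2 * n → ∃ c : Fin (4 + 2 * n) × ZMod 3,
      (c.1 : ℕ) = i ∧ (f c).2 = c.2 ∧ ((f c).1 : ℕ) = i + 1)
    (hV : ∀ j : ZMod 3, ∃ i : Fin (4 + 2 * n), f (i, j) = (i, j + 1)) : False := by
  have hbd := hz_boundary f n rfl hadj hinv hH
  have clash : ∀ (i : Fin (4 + 2 * n)) (j k : ZMod 3), j ≠ k →
      f (i, j) = (i, j + 1) → f (i, k) = (i, k + 1) → False := by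
    intro i j k hjk h1 h2
    have hadd : ∀ z : ZMod 3, z + 1 + 1 ≠ z := by decide
    have hcases : ∀ j k : ZMod 3, j ≠ k → k = j + 1 ∨ j = k + 1 := by decide
    rcases hcases j k hjk with rfl | rfl
    · have : f (i, j + 1) = (i, j) := by rw [← h1, hinv]
      rw [h2] at this
      have := congrArg Prod.snd this
      exact hadd j this
    · have : f (i, k + 1) = (i, k) := by rw [← h2, hinv]
      rw [h1] at this
      have := congrArg Prod.snd this
      exact hadd k this
  obtain ⟨i0, hv0⟩ := hV 0
  obtain ⟨i1, hv1⟩ := hV 1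
  obtain ⟨i2, hv2⟩ := hV 2
  have hz0 : HzP f (i0, (0 : ZMod 3)) := by unfold HzP; rw [hv0]
  have hz1 : HzP f (i1, (1 : ZMod 3)) := by unfold HzP; rw [hv1]
  have hz2 : HzP f (i2, (2 : ZMod 3)) := by unfold HzP; rw [hv2]
  have b0 := hbd _ hz0
  have b1 := hbd _ hz1
  have b2 := hbd _ hz2
  simp only at b0 b1 b2
  have ne01 : (i0 : ℕ) ≠ (i1 : ℕ) := by
    intro h
    exact clash i0 0 1 (by decide) hv0 (by rw [Fin.ext h]; exact hv1)
  have ne02 : (i0 : ℕ) ≠ (i2 : ℕ) := by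
    intro h
    exact clash i0 0 2 (by decide) hv0 (by rw [Fin.ext h]; exact hv2)
  have ne12 : (i1 : ℕ) ≠ (i2 : ℕ) := by
    intro h
    exact clash i1 1 2 (by decide) hv1 (by rw [Fin.ext h]; exact hv2)
  omega


lemma cylAdj_symm {a b : ℕ} {c d : Fin a × ZMod b} (h : cylAdj a b c d) : cylAdj a b d c := by
  unfold cylAdj at *
  tauto

lemma cylAdj_ne {a : ℕ} {c d : Fin a × ZMod 3} (h : cylAdj a 3 c d) : c ≠ d := by
  rintro rfl
  rcases h with ⟨_, h⟩ | ⟨_, h⟩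
  · omega
  · rcases h with h | h <;> exact one_ne_zero (left_eq_add.mp h)


/-- A tiling of the cylindrical board: a set of dominoes (unordered pairs of
adjacent cells) such that every cell belongs to exactly one domino. -/
def cylIsTiling (a b : ℕ) (T : Set (Sym2 (Fin a × ZMod b))) : Prop :=
  (∀ p ∈ T, ∃ c d, cylAdj a b c d ∧ p = s(c, d)) ∧
  (∀ x : Fin a × ZMod b, ∃! p, p ∈ T ∧ x ∈ p)

/-- A tiling of the cylindrical board is fault-free if every horizontal fault-line
(between rows `i` and `i+1`, for `i + 1 < a`) and every vertical fault-line
(between columns `j` and `j+1`, for `j : ZMod b`) is crossed by some domino. -/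
def cylFaultFree (a b : ℕ) (T : Set (Sym2 (Fin a × ZMod b))) : Prop :=
  (∀ i : ℕ, i + 1 < a → ∃ c d : Fin a × ZMod b,
      s(c, d) ∈ T ∧ c.2 = d.2 ∧ (c.1 : ℕ) = i ∧ (d.1 : ℕ) = i + 1) ∧
  (∀ j : ZMod b, ∃ i : Fin a, s((i, j), (i, j + 1)) ∈ T)

/-- The cylindrical board `a′ × b` admits a fault-free domino tiling. -/
def cylFaultFreeTileable (a b : ℕ) : Prop :=
  ∃ T : Set (Sym2 (Fin a × ZMod b)), cylIsTiling a b T ∧ cylFaultFree a b T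

/-- For every natural number `n`, the cylindrical board `(4 + 2 * n)′ × (3)`
does not admit a fault-free domino tiling. -/
theorem cyl_not_faultFree_42n'3 :
    ∀ n : ℕ, ¬ cylFaultFreeTileable (4 + 2 * n) (3) := by
  intro n hcon
  obtain ⟨T, ⟨hTdom, hTuniq⟩, hFh, hFv⟩ := hcon
  -- partner function
  have hex : ∀ x : Fin (4 + 2 * n) × ZMod 3, ∃ y, s(x, y) ∈ T ∧ cylAdj (4 + 2 * n) 3 x y := by
    intro x
    obtain ⟨p, ⟨hpT, hxp⟩, -⟩ := hTuniq x
    obtain ⟨c, d, hadj, rfl⟩ := hTdom p hpT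
    rcases Sym2.mem_iff.mp hxp with rfl | rfl
    · exact ⟨d, hpT, hadj⟩
    · exact ⟨c, by rwa [Sym2.eq_swap], cylAdj_symm hadj⟩
  set f : Fin (4 + 2 * n) × ZMod 3 → Fin (4 + 2 * n) × ZMod 3 :=
    fun x => (hex x).choose with hf
  have hfT : ∀ x, s(x, f x) ∈ T := fun x => (hex x).choose_spec.1
  have hfadj : ∀ x, cylAdj (4 + 2 * n) 3 x (f x) := fun x => (hex x).choose_spec.2
  have huniq : ∀ x y, s(x, y) ∈ T → f x = y := by
    intro x y hxy
    obtain ⟨p, -, hup⟩ := hTuniq x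
    have h1 : s(x, y) = p := hup _ ⟨hxy, Sym2.mem_mk_left x y⟩
    have h2 : s(x, f x) = p := hup _ ⟨hfT x, Sym2.mem_mk_left x (f x)⟩
    rw [← h2] at h1
    rcases Sym2.eq_iff.mp h1 with ⟨-, h⟩ | ⟨h, -⟩
    · exact h.symm
    · exact absurd h.symm (cylAdj_ne (cylAdj_symm (hfadj x)))
  have hinv : ∀ x, f (f x) = x := by
    intro x
    exact huniq (f x) x (by rw [Sym2.eq_swap]; exact hfT x)
  apply auxFalse n f hfadj hinv
  · intro i hi
    obtain ⟨c, d, hT', hcd, hc, hd⟩ := hFh i hi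
    have := huniq c d hT'
    exact ⟨c, hc, by rw [this]; exact hcd.symm, by rw [this]; exact hd⟩
  · intro j
    obtain ⟨i, hT'⟩ := hFv j
    exact ⟨i, huniq _ _ hT'⟩
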